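/- Fix constants τ, β with 0 < τ < β. There exist constants C > 0 and λ > 0, depending only on τ and β, such that for every ξ ∈ ℝ³ and every differentiable solution (û, v̂, ŵ) : [0, ∞) → ℂ³ of the Fourier-mode linearized JMGT system, one has for all t ≥ 0: |V̂(t)|² ≤ C |V̂(0)|² exp(−λ |ξ|²/(1 + |ξ|²) · t), where |V̂(t)|² = |v̂(t) + τŵ(t)|² + |ξ|²|û(t) + τv̂(t)|² + |ξ|²|v̂(t)|². -/

import Mathlib

noncomputable def jmgtN (τ k2 : ℝ) (u v w : ℝ → ℂ) : ℝ → ℝ := fun x =>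
  ((v x + (τ:ℂ)*w x).re^2 + (v x + (τ:ℂ)*w x).im^2)
  + k2 * ((u x + (τ:ℂ)*v x).re^2 + (u x + (τ:ℂ)*v x).im^2)
  + k2 * ((v x).re^2 + (v x).im^2)

noncomputable def jmgtL (τ d k2 ε ρ : ℝ) (u v w : ℝ → ℂ) : ℝ → ℝ := fun x =>
  ((v x + (τ:ℂ)*w x).re^2 + (v x + (τ:ℂ)*w x).im^2)
  + k2 * ((u x + (τ:ℂ)*v x).re^2 + (u x + (τ:ℂ)*v x).im^2)
  + τ*d*k2 * ((v x).re^2 + (v x).im^2)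
  + ε*ρ*(((u x + (τ:ℂ)*v x).re * (v x + (τ:ℂ)*w x).re
          + (u x + (τ:ℂ)*v x).im * (v x + (τ:ℂ)*w x).im)
      - 2*τ*((v x).re * (v x + (τ:ℂ)*w x).re + (v x).im * (v x + (τ:ℂ)*w x).im))

noncomputable def jmgtD (τ d k2 ε ρ : ℝ) (u v w : ℝ → ℂ) : ℝ → ℝ := fun x =>
  -(2*d*k2*((v x).re^2 + (v x).im^2))
  + ε*ρ*( -((v x + (τ:ℂ)*w x).re^2 + (v x + (τ:ℂ)*w x).im^2)
    - k2*((u x + (τ:ℂ)*v x).re^2 + (u x + (τ:ℂ)*v x).im^2)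
    + (2*τ-d)*k2*((u x + (τ:ℂ)*v x).re*(v x).re + (u x + (τ:ℂ)*v x).im*(v x).im)
    + 2*((v x).re*(v x + (τ:ℂ)*w x).re + (v x).im*(v x + (τ:ℂ)*w x).im)
    + 2*τ*d*k2*((v x).re^2 + (v x).im^2))

lemma jmgt_core_upper (τ d k2 ε ρ M m a1 a2 b1 b2 c1 c2 : ℝ)
    (hτ : 0 < τ) (hε : 0 ≤ ε) (hk2 : 0 ≤ k2) (hρ0 : 0 ≤ ρ) (hρ1 : ρ ≤ 1) (hρk : ρ ≤ k2)
    (hM1 : 1 ≤ M) (hγM : τ*d ≤ M) (hετ : ε*(τ+1) ≤ m/2) :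
    (a1^2 + a2^2) + k2*(b1^2+b2^2) + τ*d*k2*(c1^2+c2^2)
      + ε*ρ*((b1*a1 + b2*a2) - 2*τ*(c1*a1 + c2*a2))
    ≤ (M + m/2) * ((a1^2+a2^2) + k2*(b1^2+b2^2) + k2*(c1^2+c2^2)) := by
  have hSz : (0:ℝ) ≤ a1^2+a2^2 := by positivity
  have hSp : (0:ℝ) ≤ b1^2+b2^2 := by positivity
  have hSv : (0:ℝ) ≤ c1^2+c2^2 := by positivity
  have hq4 : ε*ρ*(2*(b1*a1+b2*a2)) ≤ ε*ρ*((a1^2+a2^2)+(b1^2+b2^2)) :=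
    mul_le_mul_of_nonneg_left (by nlinarith [sq_nonneg (a1-b1), sq_nonneg (a2-b2)])
      (mul_nonneg hε hρ0)
  have hq5 : (ε*ρ*τ)*(-(2*(c1*a1+c2*a2))) ≤ (ε*ρ*τ)*((a1^2+a2^2)+(c1^2+c2^2)) :=
    mul_le_mul_of_nonneg_left (by nlinarith [sq_nonneg (a1+c1), sq_nonneg (a2+c2)])
      (mul_nonneg (mul_nonneg hε hρ0) hτ.le)
  have hek : ε*ρ ≤ ε*k2 := mul_le_mul_of_nonneg_left hρk hε
  have hε1 : ε*ρ ≤ ε*1 := mul_le_mul_of_nonneg_left hρ1 hε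
  have r1 : ε*ρ*(b1^2+b2^2) ≤ ε*k2*(b1^2+b2^2) := mul_le_mul_of_nonneg_right hek hSp
  have r2 : ε*ρ*(a1^2+a2^2) ≤ ε*1*(a1^2+a2^2) := mul_le_mul_of_nonneg_right hε1 hSz
  have r3 : ε*ρ*τ*(c1^2+c2^2) ≤ ε*k2*τ*(c1^2+c2^2) :=
    mul_le_mul_of_nonneg_right (mul_le_mul_of_nonneg_right hek hτ.le) hSv
  have r4 : ε*ρ*τ*(a1^2+a2^2) ≤ ε*1*τ*(a1^2+a2^2) :=
    mul_le_mul_of_nonneg_right (mul_le_mul_of_nonneg_right hε1 hτ.le) hSz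
  have s1 : (ε*(τ+1))*(a1^2+a2^2) ≤ (m/2)*(a1^2+a2^2) := mul_le_mul_of_nonneg_right hετ hSz
  have s2 : (ε*(τ+1))*(k2*(b1^2+b2^2)) ≤ (m/2)*(k2*(b1^2+b2^2)) :=
    mul_le_mul_of_nonneg_right hετ (mul_nonneg hk2 hSp)
  have s3 : (ε*(τ+1))*(k2*(c1^2+c2^2)) ≤ (m/2)*(k2*(c1^2+c2^2)) :=
    mul_le_mul_of_nonneg_right hετ (mul_nonneg hk2 hSv)
  have m1 : 1*(a1^2+a2^2) ≤ M*(a1^2+a2^2) := mul_le_mul_of_nonneg_right hM1 hSz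
  have m2 : 1*(k2*(b1^2+b2^2)) ≤ M*(k2*(b1^2+b2^2)) :=
    mul_le_mul_of_nonneg_right hM1 (mul_nonneg hk2 hSp)
  have m3 : (τ*d)*(k2*(c1^2+c2^2)) ≤ M*(k2*(c1^2+c2^2)) :=
    mul_le_mul_of_nonneg_right hγM (mul_nonneg hk2 hSv)
  have p1 : 0 ≤ ε*(a1^2+a2^2) := mul_nonneg hε hSz
  have p2 : 0 ≤ ε*(k2*(b1^2+b2^2)) := mul_nonneg hε (mul_nonneg hk2 hSp)
  have p3 : 0 ≤ ε*(k2*(c1^2+c2^2)) := mul_nonneg hε (mul_nonneg hk2 hSv)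
  have p2t : 0 ≤ ε*τ*(k2*(b1^2+b2^2)) := mul_nonneg (mul_nonneg hε hτ.le) (mul_nonneg hk2 hSp)
  linarith [hq4, hq5, r1, r2, r3, r4, s1, s2, s3, m1, m2, m3, p1, p2, p3, p2t]

lemma jmgt_core_lower (τ d k2 ε ρ m a1 a2 b1 b2 c1 c2 : ℝ)
    (hτ : 0 < τ) (hε : 0 ≤ ε) (hk2 : 0 ≤ k2) (hρ0 : 0 ≤ ρ) (hρ1 : ρ ≤ 1) (hρk : ρ ≤ k2)
    (hm1 : m ≤ 1) (hmγ : m ≤ τ*d) (hετ : ε*(τ+1) ≤ m/2) :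
    (m/2) * ((a1^2+a2^2) + k2*(b1^2+b2^2) + k2*(c1^2+c2^2))
    ≤ (a1^2 + a2^2) + k2*(b1^2+b2^2) + τ*d*k2*(c1^2+c2^2)
      + ε*ρ*((b1*a1 + b2*a2) - 2*τ*(c1*a1 + c2*a2)) := by
  have hSz : (0:ℝ) ≤ a1^2+a2^2 := by positivity
  have hSp : (0:ℝ) ≤ b1^2+b2^2 := by positivity
  have hSv : (0:ℝ) ≤ c1^2+c2^2 := by positivity
  have hq4 : ε*ρ*(-(2*(b1*a1+b2*a2))) ≤ ε*ρ*((a1^2+a2^2)+(b1^2+b2^2)) :=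
    mul_le_mul_of_nonneg_left (by nlinarith [sq_nonneg (a1+b1), sq_nonneg (a2+b2)])
      (mul_nonneg hε hρ0)
  have hq5 : (ε*ρ*τ)*(2*(c1*a1+c2*a2)) ≤ (ε*ρ*τ)*((a1^2+a2^2)+(c1^2+c2^2)) :=
    mul_le_mul_of_nonneg_left (by nlinarith [sq_nonneg (a1-c1), sq_nonneg (a2-c2)])
      (mul_nonneg (mul_nonneg hε hρ0) hτ.le)
  have hek : ε*ρ ≤ ε*k2 := mul_le_mul_of_nonneg_left hρk hε
  have hε1 : ε*ρ ≤ ε*1 := mul_le_mul_of_nonneg_left hρ1 hε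
  have r1 : ε*ρ*(b1^2+b2^2) ≤ ε*k2*(b1^2+b2^2) := mul_le_mul_of_nonneg_right hek hSp
  have r2 : ε*ρ*(a1^2+a2^2) ≤ ε*1*(a1^2+a2^2) := mul_le_mul_of_nonneg_right hε1 hSz
  have r3 : ε*ρ*τ*(c1^2+c2^2) ≤ ε*k2*τ*(c1^2+c2^2) :=
    mul_le_mul_of_nonneg_right (mul_le_mul_of_nonneg_right hek hτ.le) hSv
  have r4 : ε*ρ*τ*(a1^2+a2^2) ≤ ε*1*τ*(a1^2+a2^2) :=
    mul_le_mul_of_nonneg_right (mul_le_mul_of_nonneg_right hε1 hτ.le) hSz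
  have s1 : (ε*(τ+1))*(a1^2+a2^2) ≤ (m/2)*(a1^2+a2^2) := mul_le_mul_of_nonneg_right hετ hSz
  have s2 : (ε*(τ+1))*(k2*(b1^2+b2^2)) ≤ (m/2)*(k2*(b1^2+b2^2)) :=
    mul_le_mul_of_nonneg_right hετ (mul_nonneg hk2 hSp)
  have s3 : (ε*(τ+1))*(k2*(c1^2+c2^2)) ≤ (m/2)*(k2*(c1^2+c2^2)) :=
    mul_le_mul_of_nonneg_right hετ (mul_nonneg hk2 hSv)
  have mm1 : m*(a1^2+a2^2) ≤ 1*(a1^2+a2^2) := mul_le_mul_of_nonneg_right hm1 hSz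
  have mm2 : m*(k2*(b1^2+b2^2)) ≤ 1*(k2*(b1^2+b2^2)) :=
    mul_le_mul_of_nonneg_right hm1 (mul_nonneg hk2 hSp)
  have mm3 : m*(k2*(c1^2+c2^2)) ≤ (τ*d)*(k2*(c1^2+c2^2)) :=
    mul_le_mul_of_nonneg_right hmγ (mul_nonneg hk2 hSv)
  have p1 : 0 ≤ ε*(a1^2+a2^2) := mul_nonneg hε hSz
  have p2 : 0 ≤ ε*(k2*(b1^2+b2^2)) := mul_nonneg hε (mul_nonneg hk2 hSp)
  have p3 : 0 ≤ ε*(k2*(c1^2+c2^2)) := mul_nonneg hε (mul_nonneg hk2 hSv)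
  have p2t : 0 ≤ ε*τ*(k2*(b1^2+b2^2)) := mul_nonneg (mul_nonneg hε hτ.le) (mul_nonneg hk2 hSp)
  linarith [hq4, hq5, r1, r2, r3, r4, s1, s2, s3, mm1, mm2, mm3, p1, p2, p3, p2t]

set_option maxHeartbeats 1600000 in
lemma jmgt_core_Dle (τ d k2 ε ρ lam c M m a1 a2 b1 b2 c1 c2 : ℝ)
    (hτ : 0 < τ) (hd : 0 < d) (hε : 0 ≤ ε) (hk2 : 0 ≤ k2)
    (hρ0 : 0 ≤ ρ) (hρ1 : ρ ≤ 1) (hρk : ρ ≤ k2)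
    (hM1 : 1 ≤ M) (hγM : τ*d ≤ M) (hετ : ε*(τ+1) ≤ m/2)
    (hεM0 : ε*(4+d^2+4*τ^2+2*τ*d) ≤ d)
    (hc0 : 0 ≤ c) (hcε : c ≤ ε/2) (hcd : c ≤ d)
    (hlam0 : 0 ≤ lam) (hlamc : lam*(M+m/2) = c) :
    -(2*d*k2*(c1^2+c2^2))
      + ε*ρ*( -(a1^2+a2^2) - k2*(b1^2+b2^2)
        + (2*τ-d)*k2*(b1*c1 + b2*c2)
        + 2*(c1*a1 + c2*a2)
        + 2*τ*d*k2*(c1^2+c2^2))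
    ≤ -(lam*ρ) * ((a1^2 + a2^2) + k2*(b1^2+b2^2) + τ*d*k2*(c1^2+c2^2)
        + ε*ρ*((b1*a1 + b2*a2) - 2*τ*(c1*a1 + c2*a2))) := by
  have hSz : (0:ℝ) ≤ a1^2+a2^2 := by positivity
  have hSp : (0:ℝ) ≤ b1^2+b2^2 := by positivity
  have hSv : (0:ℝ) ≤ c1^2+c2^2 := by positivity
  have A1 := jmgt_core_upper τ d k2 ε ρ M m a1 a2 b1 b2 c1 c2 hτ hε hk2 hρ0 hρ1 hρk hM1 hγM hετ
  have A8 := mul_le_mul_of_nonneg_left A1 (mul_nonneg hlam0 hρ0)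
  have hce : lam*ρ*((M + m/2) * ((a1^2+a2^2) + k2*(b1^2+b2^2) + k2*(c1^2+c2^2)))
      = c*(ρ*((a1^2+a2^2) + k2*(b1^2+b2^2) + k2*(c1^2+c2^2))) := by
    linear_combination (ρ*((a1^2+a2^2) + k2*(b1^2+b2^2) + k2*(c1^2+c2^2)))*hlamc
  have b1f : c*(ρ*(a1^2+a2^2)) ≤ ε/2*(ρ*(a1^2+a2^2)) :=
    mul_le_mul_of_nonneg_right hcε (mul_nonneg hρ0 hSz)
  have b2f : c*(ρ*(k2*(b1^2+b2^2))) ≤ ε/2*(ρ*(k2*(b1^2+b2^2))) :=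
    mul_le_mul_of_nonneg_right hcε (mul_nonneg hρ0 (mul_nonneg hk2 hSp))
  have hcρd : c*ρ ≤ d := (mul_le_of_le_one_right hc0 hρ1).trans hcd
  have b3f : (c*ρ)*(k2*(c1^2+c2^2)) ≤ d*(k2*(c1^2+c2^2)) :=
    mul_le_mul_of_nonneg_right hcρd (mul_nonneg hk2 hSv)
  have hq1s : (ε*ρ)*(2*(c1*a1+c2*a2)) ≤ (ε*ρ)*((a1^2+a2^2)/4 + 4*(c1^2+c2^2)) :=
    mul_le_mul_of_nonneg_left (by nlinarith [sq_nonneg (a1-4*c1), sq_nonneg (a2-4*c2)])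
      (mul_nonneg hε hρ0)
  have hq2s : (ε*ρ*k2)*(2*τ*(b1*c1+b2*c2)) ≤ (ε*ρ*k2)*((b1^2+b2^2)/4 + 4*τ^2*(c1^2+c2^2)) :=
    mul_le_mul_of_nonneg_left (by nlinarith [sq_nonneg (b1-4*τ*c1), sq_nonneg (b2-4*τ*c2)])
      (mul_nonneg (mul_nonneg hε hρ0) hk2)
  have hq3s : (ε*ρ*k2)*(-(d*(b1*c1+b2*c2))) ≤ (ε*ρ*k2)*((b1^2+b2^2)/4 + d^2*(c1^2+c2^2)) :=
    mul_le_mul_of_nonneg_left (by nlinarith [sq_nonneg (b1+2*d*c1), sq_nonneg (b2+2*d*c2)])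
      (mul_nonneg (mul_nonneg hε hρ0) hk2)
  have hek : ε*ρ ≤ ε*k2 := mul_le_mul_of_nonneg_left hρk hε
  have hε1 : ε*ρ ≤ ε*1 := mul_le_mul_of_nonneg_left hρ1 hε
  have hekk : ε*ρ*k2 ≤ ε*1*k2 := mul_le_mul_of_nonneg_right hε1 hk2
  have j1 : ε*ρ*(4*(c1^2+c2^2)) ≤ ε*k2*(4*(c1^2+c2^2)) :=
    mul_le_mul_of_nonneg_right hek (by positivity)
  have j2 : ε*ρ*k2*(4*τ^2*(c1^2+c2^2)) ≤ ε*1*k2*(4*τ^2*(c1^2+c2^2)) :=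
    mul_le_mul_of_nonneg_right hekk (by positivity)
  have j3 : ε*ρ*k2*(d^2*(c1^2+c2^2)) ≤ ε*1*k2*(d^2*(c1^2+c2^2)) :=
    mul_le_mul_of_nonneg_right hekk (by positivity)
  have j4 : ε*ρ*k2*(2*τ*d*(c1^2+c2^2)) ≤ ε*1*k2*(2*τ*d*(c1^2+c2^2)) :=
    mul_le_mul_of_nonneg_right hekk
      (mul_nonneg (mul_nonneg (mul_nonneg (by norm_num) hτ.le) hd.le) hSv)
  have g3 : (ε*(4+d^2+4*τ^2+2*τ*d))*(k2*(c1^2+c2^2)) ≤ d*(k2*(c1^2+c2^2)) :=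
    mul_le_mul_of_nonneg_right hεM0 (mul_nonneg hk2 hSv)
  have hn1 : 0 ≤ ε*ρ*(a1^2+a2^2) := mul_nonneg (mul_nonneg hε hρ0) hSz
  have hn2 : 0 ≤ ε*ρ*(k2*(b1^2+b2^2)) := mul_nonneg (mul_nonneg hε hρ0) (mul_nonneg hk2 hSp)
  linarith [A8, hce, b1f, b2f, b3f, hq1s, hq2s, hq3s, j1, j2, j3, j4, g3, hn1, hn2]

lemma jmgt_hasDerivAt_re {f : ℝ → ℂ} {F : ℂ} {s : ℝ} (hf : HasDerivAt f F s) :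
    HasDerivAt (fun t => (f t).re) F.re s :=
  Complex.reCLM.hasFDerivAt.comp_hasDerivAt s hf

lemma jmgt_hasDerivAt_im {f : ℝ → ℂ} {F : ℂ} {s : ℝ} (hf : HasDerivAt f F s) :
    HasDerivAt (fun t => (f t).im) F.im s :=
  Complex.imCLM.hasFDerivAt.comp_hasDerivAt s hf

set_option maxHeartbeats 1600000 in
lemma jmgt_hasDerivAt_L (τ β d k2 ε ρ : ℝ) (hτ : 0 < τ) (hddef : d = β - τ)
    (u v w w' : ℝ → ℂ) (s : ℝ)
    (hus : HasDerivAt u (v s) s) (hvs : HasDerivAt v (w s) s) (hws : HasDerivAt w (w' s) s)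
    (hodes : (τ:ℂ) * w' s = -((k2:ℝ):ℂ) * u s - ((β*k2:ℝ):ℂ) * v s - w s) :
    HasDerivAt (jmgtL τ d k2 ε ρ u v w) (jmgtD τ d k2 ε ρ u v w s) s := by
  have hz : HasDerivAt (fun t => v t + (τ : ℂ) * w t)
      (-(k2 : ℂ) * (u s + (τ:ℂ) * v s) - ((d:ℝ) : ℂ) * (k2 : ℂ) * v s) s := by
    have h1 := hvs.add (HasDerivAt.const_mul (τ:ℂ) hws)
    have h3 : w s + (τ:ℂ) * w' s
        = -(k2 : ℂ) * (u s + (τ:ℂ) * v s) - ((d:ℝ) : ℂ) * (k2 : ℂ) * v s := by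
      rw [hddef]
      push_cast at hodes ⊢
      linear_combination hodes
    rwa [h3] at h1
  have hp : HasDerivAt (fun t => u t + (τ : ℂ) * v t) (v s + (τ:ℂ) * w s) s :=
    hus.add (HasDerivAt.const_mul (τ:ℂ) hvs)
  have hzr : HasDerivAt (fun t => (v t + (τ : ℂ) * w t).re)
      (-k2 * (u s + (τ:ℂ) * v s).re - d * k2 * (v s).re) s := by
    have h := jmgt_hasDerivAt_re hz
    convert h using 1
    simp [Complex.sub_re, Complex.neg_re, Complex.mul_re]
  have hzi : HasDerivAt (fun t => (v t + (τ : ℂ) * w t).im)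
      (-k2 * (u s + (τ:ℂ) * v s).im - d * k2 * (v s).im) s := by
    have h := jmgt_hasDerivAt_im hz
    convert h using 1
    simp [Complex.sub_im, Complex.neg_im, Complex.mul_im]
  have hpr : HasDerivAt (fun t => (u t + (τ : ℂ) * v t).re)
      ((v s + (τ:ℂ) * w s).re) s := jmgt_hasDerivAt_re hp
  have hpi : HasDerivAt (fun t => (u t + (τ : ℂ) * v t).im)
      ((v s + (τ:ℂ) * w s).im) s := jmgt_hasDerivAt_im hp
  have hvr : HasDerivAt (fun t => (v t).re) ((w s).re) s := jmgt_hasDerivAt_re hvs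
  have hvi : HasDerivAt (fun t => (v t).im) ((w s).im) s := jmgt_hasDerivAt_im hvs
  have hwr : (w s).re = ((v s + (τ:ℂ)*w s).re - (v s).re)/τ := by
    have h : (v s + (τ:ℂ)*w s).re = (v s).re + τ*(w s).re := by
      simp [Complex.add_re, Complex.mul_re]
    rw [h]; field_simp; ring
  have hwi : (w s).im = ((v s + (τ:ℂ)*w s).im - (v s).im)/τ := by
    have h : (v s + (τ:ℂ)*w s).im = (v s).im + τ*(w s).im := by
      simp [Complex.add_im, Complex.mul_im]
    rw [h]; field_simp; ring
  have H := ((((hzr.pow 2).add (hzi.pow 2)).add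
      (((hpr.pow 2).add (hpi.pow 2)).const_mul k2)).add
      (((hvr.pow 2).add (hvi.pow 2)).const_mul (τ*d*k2))).add
      ((((hpr.mul hzr).add (hpi.mul hzi)).sub
        (((hvr.mul hzr).add (hvi.mul hzi)).const_mul (2*τ))).const_mul (ε*ρ))
  unfold jmgtL jmgtD
  refine H.congr_deriv ?_
  rw [hwr, hwi]
  push_cast
  field_simp
  ring

lemma jmgt_abs_sq (z : ℂ) : ‖z‖ ^ 2 = z.re^2 + z.im^2 := by
  rw [Complex.sq_norm, Complex.normSq_apply]; ring


set_option maxHeartbeats 1600000 in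
/-- Pointwise exponential decay of the Fourier-mode energy for the linearized JMGT system:
there exist `C, λ > 0` such that for every `ξ ∈ ℝ³` and every differentiable solution of
`û' = v̂`, `v̂' = ŵ`, `τŵ' = −|ξ|²û − β|ξ|²v̂ − ŵ`, one has
`|V̂(t)|² ≤ C |V̂(0)|² exp(−λ|ξ|²/(1+|ξ|²) t)` where
`|V̂(t)|² = |v̂+τŵ|² + |ξ|²|û+τv̂|² + |ξ|²|v̂|²`. -/
theorem jmgt_fourier_energy_decay (τ β : ℝ) (hτ : 0 < τ) (hτβ : τ < β) :
    ∃ C > (0 : ℝ), ∃ lam > (0 : ℝ),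
      ∀ (ξ : EuclideanSpace ℝ (Fin 3)) (u v w w' : ℝ → ℂ),
        (∀ t ≥ (0 : ℝ), HasDerivAt u (v t) t) →
        (∀ t ≥ (0 : ℝ), HasDerivAt v (w t) t) →
        (∀ t ≥ (0 : ℝ), HasDerivAt w (w' t) t) →
        (∀ t ≥ (0 : ℝ), (τ : ℂ) * w' t =
          -((‖ξ‖ ^ 2 : ℝ) : ℂ) * u t - ((β * ‖ξ‖ ^ 2 : ℝ) : ℂ) * v t - w t) →
        ∀ t ≥ (0 : ℝ),
          ‖v t + (τ : ℂ) * w t‖ ^ 2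
            + ‖ξ‖ ^ 2 * ‖u t + (τ : ℂ) * v t‖ ^ 2
            + ‖ξ‖ ^ 2 * ‖v t‖ ^ 2 ≤
          C * (‖v 0 + (τ : ℂ) * w 0‖ ^ 2
            + ‖ξ‖ ^ 2 * ‖u 0 + (τ : ℂ) * v 0‖ ^ 2
            + ‖ξ‖ ^ 2 * ‖v 0‖ ^ 2)
            * Real.exp (-lam * (‖ξ‖ ^ 2 / (1 + ‖ξ‖ ^ 2)) * t) := by
  set d : ℝ := β - τ with hddef
  have hd : 0 < d := by rw [hddef]; linarith
  have hγ : 0 < τ*d := mul_pos hτ hd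
  set m : ℝ := min 1 (τ*d) with hmdef
  have hm : 0 < m := lt_min one_pos hγ
  have hm1 : m ≤ 1 := min_le_left _ _
  have hmγ : m ≤ τ*d := min_le_right _ _
  set M : ℝ := max 1 (τ*d) with hMdef
  have hM1 : (1:ℝ) ≤ M := le_max_left _ _
  have hγM : τ*d ≤ M := le_max_right _ _
  have hM0pos : (0:ℝ) < 4+d^2+4*τ^2+2*τ*d := by nlinarith [sq_nonneg d, sq_nonneg τ, hγ]
  set ε : ℝ := min (d/(4+d^2+4*τ^2+2*τ*d)) (m/(2*(τ+1))) with hεdef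
  have hε : 0 < ε := lt_min (div_pos hd hM0pos) (div_pos hm (by positivity))
  have hεM0 : ε*(4+d^2+4*τ^2+2*τ*d) ≤ d :=
    (le_div_iff₀ hM0pos).mp (min_le_left _ _)
  have hετ : ε*(τ+1) ≤ m/2 := by
    have h := (le_div_iff₀ (by positivity : (0:ℝ) < 2*(τ+1))).mp
      (min_le_right (d/(4+d^2+4*τ^2+2*τ*d)) (m/(2*(τ+1))))
    linarith
  set c : ℝ := min (ε/2) d with hcdef
  have hc : 0 < c := lt_min (by positivity) hd
  have hcε : c ≤ ε/2 := min_le_left _ _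
  have hcd : c ≤ d := min_le_right _ _
  have hMm : 0 < M + m/2 := by linarith
  set lam : ℝ := c/(M+m/2) with hlamdef
  have hlam : 0 < lam := div_pos hc hMm
  have hlamc : lam*(M+m/2) = c := div_mul_cancel₀ c hMm.ne'
  set C : ℝ := 2*M/m + 1 with hCdef
  have hC : 0 < C := by
    have h2 : 0 < 2*M/m := div_pos (by linarith) hm
    rw [hCdef]; linarith
  refine ⟨C, hC, lam, hlam, ?_⟩
  intro ξ u v w w' hu hv hw hode t ht
  set k2 : ℝ := ‖ξ‖^2 with hk2def
  have hk2 : 0 ≤ k2 := by rw [hk2def]; positivity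
  have h1k2 : (0:ℝ) < 1 + k2 := by linarith
  set ρ : ℝ := k2/(1+k2) with hρdef
  have hρ0 : 0 ≤ ρ := by rw [hρdef]; positivity
  have hρ1 : ρ ≤ 1 := by rw [hρdef, div_le_one h1k2]; linarith
  have hρk : ρ ≤ k2 := by rw [hρdef]; exact div_le_self hk2 (by linarith)
  have hLD : ∀ x, 0 ≤ x → HasDerivAt (jmgtL τ d k2 ε ρ u v w) (jmgtD τ d k2 ε ρ u v w x) x :=
    fun x hx => jmgt_hasDerivAt_L τ β d k2 ε ρ hτ hddef u v w w' x
      (hu x hx) (hv x hx) (hw x hx) (hode x hx)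
  have hDle : ∀ x, jmgtD τ d k2 ε ρ u v w x ≤ -(lam*ρ) * jmgtL τ d k2 ε ρ u v w x := by
    intro x
    simp only [jmgtD, jmgtL]
    exact jmgt_core_Dle τ d k2 ε ρ lam c M m
      ((v x + (τ:ℂ)*w x).re) ((v x + (τ:ℂ)*w x).im)
      ((u x + (τ:ℂ)*v x).re) ((u x + (τ:ℂ)*v x).im)
      ((v x).re) ((v x).im)
      hτ hd hε.le hk2 hρ0 hρ1 hρk hM1 hγM hετ hεM0 hc.le hcε hcd hlam.le hlamc
  have hup : ∀ x, jmgtL τ d k2 ε ρ u v w x ≤ (M + m/2) * jmgtN τ k2 u v w x := by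
    intro x
    simp only [jmgtL, jmgtN]
    exact jmgt_core_upper τ d k2 ε ρ M m
      ((v x + (τ:ℂ)*w x).re) ((v x + (τ:ℂ)*w x).im)
      ((u x + (τ:ℂ)*v x).re) ((u x + (τ:ℂ)*v x).im)
      ((v x).re) ((v x).im)
      hτ hε.le hk2 hρ0 hρ1 hρk hM1 hγM hετ
  have hlow : ∀ x, (m/2) * jmgtN τ k2 u v w x ≤ jmgtL τ d k2 ε ρ u v w x := by
    intro x
    simp only [jmgtL, jmgtN]
    exact jmgt_core_lower τ d k2 ε ρ m
      ((v x + (τ:ℂ)*w x).re) ((v x + (τ:ℂ)*w x).im)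
      ((u x + (τ:ℂ)*v x).re) ((u x + (τ:ℂ)*v x).im)
      ((v x).re) ((v x).im)
      hτ hε.le hk2 hρ0 hρ1 hρk hm1 hmγ hετ
  -- Gronwall via antitonicity
  have hg : ∀ x, 0 ≤ x → HasDerivAt
      (fun y => jmgtL τ d k2 ε ρ u v w y * Real.exp (lam*ρ*y))
      (jmgtD τ d k2 ε ρ u v w x * Real.exp (lam*ρ*x)
        + jmgtL τ d k2 ε ρ u v w x * (Real.exp (lam*ρ*x) * (lam*ρ*1))) x := by
    intro x hx
    exact (hLD x hx).mul (((hasDerivAt_id x).const_mul (lam*ρ)).exp)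
  have hanti : AntitoneOn (fun y => jmgtL τ d k2 ε ρ u v w y * Real.exp (lam*ρ*y))
      (Set.Ici 0) := by
    apply antitoneOn_of_deriv_nonpos (convex_Ici 0)
    · intro x hx
      exact ((hg x hx).continuousAt).continuousWithinAt
    · intro x hx
      rw [interior_Ici] at hx
      exact ((hg x (le_of_lt hx)).differentiableAt).differentiableWithinAt
    · intro x hx
      rw [interior_Ici] at hx
      rw [(hg x hx.le).deriv]
      have h1 := hDle x
      have h2 := (Real.exp_pos (lam*ρ*x)).le
      nlinarith [mul_le_mul_of_nonneg_right h1 h2]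
  have hkey := hanti (Set.self_mem_Ici) (show t ∈ Set.Ici (0:ℝ) from ht) ht
  simp only [mul_zero, Real.exp_zero, mul_one] at hkey
  have hLt : jmgtL τ d k2 ε ρ u v w t ≤ jmgtL τ d k2 ε ρ u v w 0 * Real.exp (-lam*ρ*t) := by
    have h7 : Real.exp (-lam*ρ*t) = (Real.exp (lam*ρ*t))⁻¹ := by
      rw [show -lam*ρ*t = -(lam*ρ*t) by ring, Real.exp_neg]
    rw [h7, ← div_eq_mul_inv, le_div_iff₀ (Real.exp_pos _)]
    exact hkey
  have hNt : ‖v t + (τ : ℂ) * w t‖ ^ 2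
      + k2 * ‖u t + (τ : ℂ) * v t‖ ^ 2
      + k2 * ‖v t‖ ^ 2 = jmgtN τ k2 u v w t := by
    simp only [jmgtN, jmgt_abs_sq]
  have hN0 : ‖v 0 + (τ : ℂ) * w 0‖ ^ 2
      + k2 * ‖u 0 + (τ : ℂ) * v 0‖ ^ 2
      + k2 * ‖v 0‖ ^ 2 = jmgtN τ k2 u v w 0 := by
    simp only [jmgtN, jmgt_abs_sq]
  rw [hNt, hN0]
  have hEnn : (0:ℝ) ≤ Real.exp (-lam*ρ*t) := (Real.exp_pos _).le
  have h3 := mul_le_mul_of_nonneg_right (hup 0) hEnn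
  have h1 := hlow t
  have h4 : (m/2) * jmgtN τ k2 u v w t
      ≤ (M + m/2) * jmgtN τ k2 u v w 0 * Real.exp (-lam*ρ*t) := by linarith
  have h5 := mul_le_mul_of_nonneg_left h4 (le_of_lt (div_pos two_pos hm))
  have e1 : (2/m)*((m/2) * jmgtN τ k2 u v w t) = jmgtN τ k2 u v w t := by
    field_simp
  have e2 : (2/m)*((M + m/2) * jmgtN τ k2 u v w 0 * Real.exp (-lam*ρ*t))
      = C * jmgtN τ k2 u v w 0 * Real.exp (-lam*ρ*t) := by
    rw [hCdef]; field_simp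
  rw [e1, e2] at h5
  exact h5
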